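/- Least solutions of linear systems: let Q be a finite type, M : Q → Q → RegularExpression α and b : Q → RegularExpression α. Then there exists s : Q → RegularExpression α such that for every regular expression e, the vector q ↦ s q * e is the least e-solution to (M, b): (i) for all q, b q * e ⊴ s q * e; (ii) for all q, q', M q q' * (s q' * e) ⊴ s q * e; and (iii) for every s' : Q → RegularExpression α satisfying b q * e ⊴ s' q and M q q' * s' q' ⊴ s' q for all q, q', it holds that s q * e ⊴ s' q for all q. -/

import Mathlib

/-- Homomorphic extension of `h : α → K` to regular expressions. -/
def interp {α : Type*} {K : Type*} [KleeneAlgebra K] (h : α → K) :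
    RegularExpression α → K
  | .zero => 0
  | .epsilon => 1
  | .char a => h a
  | .plus e f => interp h e + interp h f
  | .comp e f => interp h e * interp h f
  | .star e => KStar.kstar (interp h e)

universe u

/-- `e ⊴ f`: under every interpretation into any Kleene algebra, `ĥ e ≤ ĥ f`. -/
def kle {α : Type*} (e f : RegularExpression α) : Prop :=
  ∀ (K : Type u) [KleeneAlgebra K] (h : α → K), interp h e ≤ interp h f

section
variable {α : Type*} {K : Type*} [KleeneAlgebra K] (h : α → K)

@[simp] lemma interp_add (x y : RegularExpression α) :
    interp h (x + y) = interp h x + interp h y := rfl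
@[simp] lemma interp_mul (x y : RegularExpression α) :
    interp h (x * y) = interp h x * interp h y := rfl
@[simp] lemma interp_star (x : RegularExpression α) :
    interp h x.star = KStar.kstar (interp h x) := rfl
@[simp] lemma interp_zero : interp h (0 : RegularExpression α) = 0 := rfl

end

/-- Generic Gaussian-elimination solver for linear systems, over any type with the
regular operations (star passed explicitly). -/
def sol {R : Type*} [Zero R] [Add R] [Mul R] (st : R → R) :
    ∀ n, (Fin n → Fin n → R) → (Fin n → R) → Fin n → R
  | 0, _, _ => Fin.elim0
  | n + 1, m, c =>
    let a := st (m 0 0)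
    let t := sol st n
      (fun i j => m i.succ j.succ + m i.succ 0 * a * m 0 j.succ)
      (fun i => c i.succ + m i.succ 0 * a * c 0)
    Fin.cases (a * (c 0 + (List.ofFn fun j => m 0 j.succ * t j).sum)) t

lemma interp_sum {α : Type*} {K : Type*} [KleeneAlgebra K] (h : α → K)
    (l : List (RegularExpression α)) : interp h l.sum = (l.map (interp h)).sum := by
  induction l with
  | nil => rfl
  | cons x xs ih => simp [List.sum_cons, ih]

/-- `interp` commutes with `sol`. -/
lemma interp_sol {α : Type*} {K : Type*} [KleeneAlgebra K] (h : α → K) :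
    ∀ n (m : Fin n → Fin n → RegularExpression α) (c : Fin n → RegularExpression α) q,
      interp h (sol RegularExpression.star n m c q)
        = sol KStar.kstar n (fun i j => interp h (m i j)) (fun i => interp h (c i)) q
  | 0, _, _, q => q.elim0
  | n + 1, m, c, q => by
    have key : ∀ i, interp h
        (sol RegularExpression.star n
          (fun i j => m i.succ j.succ + m i.succ 0 * RegularExpression.star (m 0 0) * m 0 j.succ)
          (fun i => c i.succ + m i.succ 0 * RegularExpression.star (m 0 0) * c 0) i)
        = sol KStar.kstar n
          (fun i j => interp h (m i.succ j.succ)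
            + interp h (m i.succ 0) * KStar.kstar (interp h (m 0 0)) * interp h (m 0 j.succ))
          (fun i => interp h (c i.succ)
            + interp h (m i.succ 0) * KStar.kstar (interp h (m 0 0)) * interp h (c 0)) i := by
      intro i
      rw [interp_sol h n]
      simp
    induction q using Fin.cases with
    | zero =>
      have e1 : sol RegularExpression.star (n+1) m c 0
          = (m 0 0).star * (c 0 + (List.ofFn fun j =>
              m 0 j.succ * sol RegularExpression.star n
                (fun i j => m i.succ j.succ + m i.succ 0 * (m 0 0).star * m 0 j.succ)
                (fun i => c i.succ + m i.succ 0 * (m 0 0).star * c 0) j).sum) := rfl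
      have e2 : sol KStar.kstar (n+1) (fun i j => interp h (m i j)) (fun i => interp h (c i)) 0
          = KStar.kstar (interp h (m 0 0)) * (interp h (c 0) + (List.ofFn fun j =>
              interp h (m 0 j.succ) * sol KStar.kstar n
                (fun i j => interp h (m i.succ j.succ)
                  + interp h (m i.succ 0) * KStar.kstar (interp h (m 0 0)) * interp h (m 0 j.succ))
                (fun i => interp h (c i.succ)
                  + interp h (m i.succ 0) * KStar.kstar (interp h (m 0 0)) * interp h (c 0))
                j).sum) := rfl
      rw [e1, e2, interp_mul, interp_star, interp_add, interp_sum, List.map_ofFn]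
      congr 2
      refine congrArg List.sum (congrArg (List.ofFn (n := n)) ?_)
      funext j
      simp only [Function.comp_apply, interp_mul, key j]
    | succ i =>
      exact key i

section KA

variable {K : Type*} [KleeneAlgebra K]

lemma list_sum_le {x : K} : ∀ {l : List K}, (∀ a ∈ l, a ≤ x) → l.sum ≤ x
  | [], _ => by simpa using zero_le x
  | a :: l, h => by
    rw [List.sum_cons]
    exact add_le (h a (by simp)) (list_sum_le fun b hb => h b (by simp [hb]))

lemma mul_list_sum (a : K) : ∀ l : List K, a * l.sum = (l.map (a * ·)).sum
  | [] => by simp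
  | b :: l => by simp [mul_add, mul_list_sum a l]

lemma list_sum_mul (a : K) : ∀ l : List K, l.sum * a = (l.map (· * a)).sum
  | [] => by simp
  | b :: l => by simp [add_mul, list_sum_mul a l]

/-- The main Kleene-algebra lemma: `sol` yields the least solution. -/
lemma sol_spec : ∀ n (m : Fin n → Fin n → K) (c : Fin n → K),
    (∀ q, c q ≤ sol KStar.kstar n m c q) ∧
    (∀ q q', m q q' * sol KStar.kstar n m c q' ≤ sol KStar.kstar n m c q) ∧
    (∀ (E : K) (x : Fin n → K), (∀ q, c q * E ≤ x q) → (∀ q q', m q q' * x q' ≤ x q) →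
      ∀ q, sol KStar.kstar n m c q * E ≤ x q)
  | 0, m, c => ⟨fun q => q.elim0, fun q => q.elim0, fun _ _ _ _ q => q.elim0⟩
  | n + 1, m, c => by
    set a := KStar.kstar (m 0 0) with ha
    set m' : Fin n → Fin n → K := fun i j => m i.succ j.succ + m i.succ 0 * a * m 0 j.succ
      with hm'
    set c' : Fin n → K := fun i => c i.succ + m i.succ 0 * a * c 0 with hc'
    obtain ⟨IH1, IH2, IH3⟩ := sol_spec n m' c'
    set t := sol KStar.kstar n m' c' with ht
    set Sig : K := (List.ofFn fun j => m 0 j.succ * t j).sum with hSig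
    set s0 : K := a * (c 0 + Sig) with hs0
    have hsol : sol KStar.kstar (n + 1) m c = Fin.cases s0 t := rfl
    have hs0' : ∀ i, sol KStar.kstar (n + 1) m c i.succ = t i := fun i => rfl
    have hS0 : sol KStar.kstar (n + 1) m c 0 = s0 := rfl
    -- each summand of Sig
    have hmem : ∀ y ∈ (List.ofFn fun j => m 0 j.succ * t j), ∃ j, y = m 0 j.succ * t j := by
      intro y hy
      rw [List.mem_ofFn] at hy
      obtain ⟨j, hj⟩ := hy
      exact ⟨j, hj.symm⟩
    refine ⟨?_, ?_, ?_⟩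
    · intro q
      induction q using Fin.cases with
      | zero =>
        rw [hS0, hs0]
        calc c 0 ≤ c 0 + Sig := le_add_of_nonneg_right zero_le
        _ = 1 * (c 0 + Sig) := (one_mul _).symm
        _ ≤ a * (c 0 + Sig) := mul_le_mul_left one_le_kstar _
      | succ i =>
        rw [hs0']
        exact le_trans (le_add_of_nonneg_right zero_le) (IH1 i)
    · intro q q'
      induction q using Fin.cases with
      | zero =>
        induction q' using Fin.cases with
        | zero =>
          rw [hS0, hs0, ← mul_assoc]
          exact mul_le_mul_left (le_trans (mul_le_mul_left le_kstar _)
            (kstar_mul_kstar _).le) _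
        | succ j =>
          rw [hs0', hS0, hs0]
          calc m 0 j.succ * t j ≤ Sig := by
                refine le_trans ?_ (le_of_eq rfl)
                have : m 0 j.succ * t j ∈ (List.ofFn fun j => m 0 j.succ * t j) := by
                  rw [List.mem_ofFn]; exact ⟨j, rfl⟩
                exact List.single_le_sum (fun b _ => zero_le) _ this
          _ ≤ c 0 + Sig := le_add_of_nonneg_left zero_le
          _ = 1 * (c 0 + Sig) := (one_mul _).symm
          _ ≤ a * (c 0 + Sig) := mul_le_mul_left one_le_kstar _
      | succ i =>
        induction q' using Fin.cases with
        | zero =>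
          rw [hS0, hs0, hs0']
          rw [← mul_assoc, mul_add, mul_list_sum]
          refine add_le ?_ ?_
          · calc m i.succ 0 * a * c 0 ≤ c' i := le_add_of_nonneg_left zero_le
            _ ≤ t i := IH1 i
          · refine list_sum_le ?_
            intro y hy
            rw [List.map_ofFn] at hy
            rw [List.mem_ofFn] at hy
            obtain ⟨j, hj⟩ := hy
            rw [← hj]
            show m i.succ 0 * a * (m 0 j.succ * t j) ≤ t i
            calc m i.succ 0 * a * (m 0 j.succ * t j)
                = (m i.succ 0 * a * m 0 j.succ) * t j := (mul_assoc _ _ _).symm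
            _ ≤ m' i j * t j := mul_le_mul_left (le_add_of_nonneg_left zero_le) _
            _ ≤ t i := IH2 i j
        | succ j =>
          rw [hs0', hs0']
          calc m i.succ j.succ * t j ≤ m' i j * t j :=
                mul_le_mul_left (le_add_of_nonneg_right zero_le) _
          _ ≤ t i := IH2 i j
    · intro E x hb hM q
      have hx0 : a * x 0 ≤ x 0 := kstar_mul_le_self (hM 0 0)
      have htle : ∀ i, t i * E ≤ x i.succ := by
        refine IH3 E (fun i => x i.succ) ?_ ?_
        · intro i
          rw [hc', add_mul]
          refine add_le (hb i.succ) ?_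
          rw [mul_assoc, mul_assoc]
          refine le_trans (mul_le_mul_right ?_ _) (hM i.succ 0)
          exact le_trans (mul_le_mul_right (hb 0) _) hx0
        · intro i j
          rw [hm', add_mul]
          refine add_le (hM i.succ j.succ) ?_
          rw [mul_assoc, mul_assoc]
          refine le_trans (mul_le_mul_right ?_ _) (hM i.succ 0)
          exact le_trans (mul_le_mul_right (hM 0 j.succ) _) hx0
      induction q using Fin.cases with
      | zero =>
        rw [hS0, hs0, mul_assoc]
        refine kstar_mul_le ?_ (hM 0 0)
        rw [add_mul]
        refine add_le (hb 0) ?_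
        rw [list_sum_mul]
        refine list_sum_le ?_
        intro y hy
        rw [List.map_ofFn, List.mem_ofFn] at hy
        obtain ⟨j, hj⟩ := hy
        rw [← hj]
        show m 0 j.succ * t j * E ≤ x 0
        rw [mul_assoc]
        exact le_trans (mul_le_mul_right (htle j) _) (hM 0 j.succ)
      | succ i =>
        rw [hs0']
        exact htle i

end KA


section Transfer

lemma interp_prod {α : Type*} {K : Type*} [KleeneAlgebra K] (h : α → K) :
    ∀ l : List (RegularExpression α), interp h l.prod = (l.map (interp h)).prod
  | [] => rfl
  | x :: l => by simp [List.prod_cons, interp_prod h l]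

namespace KleUniv

variable {β : Type*} {K : Type*} [KleeneAlgebra K] (g : β → K)

/-- Kernel of `interp g` as a setoid. -/
def sett : Setoid (RegularExpression β) :=
  ⟨fun x y => interp g x = interp g y, ⟨fun _ => rfl, Eq.symm, Eq.trans⟩⟩

/-- The image of `interp g`, as a quotient of the regular expressions. -/
def Q (g : β → K) := Quotient (sett g)

def mk (x : RegularExpression β) : Q g := Quotient.mk (sett g) x

def toK : Q g → K := Quotient.lift (interp g) fun _ _ h => h

@[simp] lemma toK_mk (x : RegularExpression β) : toK g (mk g x) = interp g x := rfl

lemma toK_inj : Function.Injective (toK g) := by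
  intro a b
  induction a using Quotient.ind with | _ x =>
  induction b using Quotient.ind with | _ y =>
  exact fun h => Quotient.sound h

lemma mk_surj (a : Q g) : ∃ x, a = mk g x := by
  induction a using Quotient.ind with | _ x => exact ⟨x, rfl⟩

instance : Zero (Q g) := ⟨mk g 0⟩
instance : One (Q g) := ⟨mk g 1⟩

instance : Add (Q g) :=
  ⟨Quotient.lift₂ (fun x y => mk g (x + y)) fun a b c d hac hbd => by
    refine Quotient.sound ?_
    show interp g (a + b) = interp g (c + d)
    simp only [interp_add]
    rw [show interp g a = interp g c from hac, show interp g b = interp g d from hbd]⟩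

instance : Mul (Q g) :=
  ⟨Quotient.lift₂ (fun x y => mk g (x * y)) fun a b c d hac hbd => by
    refine Quotient.sound ?_
    show interp g (a * b) = interp g (c * d)
    simp only [interp_mul]
    rw [show interp g a = interp g c from hac, show interp g b = interp g d from hbd]⟩

instance : KStar (Q g) :=
  ⟨Quotient.lift (fun x => mk g x.star) fun a b hab => by
    refine Quotient.sound ?_
    show interp g a.star = interp g b.star
    simp only [interp_star]
    rw [show interp g a = interp g b from hab]⟩

instance : SMul ℕ (Q g) :=
  ⟨fun n => Quotient.lift (fun x => mk g ((List.replicate n x).sum)) fun a b hab => by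
    refine Quotient.sound ?_
    show interp g _ = interp g _
    rw [interp_sum, interp_sum, List.map_replicate, List.map_replicate,
      show interp g a = interp g b from hab]⟩

instance : Pow (Q g) ℕ :=
  ⟨fun a n => Quotient.lift (fun x => mk g ((List.replicate n x).prod)) (fun a b hab => by
    refine Quotient.sound ?_
    show interp g _ = interp g _
    rw [interp_prod, interp_prod, List.map_replicate, List.map_replicate,
      show interp g a = interp g b from hab]) a⟩

instance : NatCast (Q g) := ⟨fun n => mk g ((List.replicate n 1).sum)⟩

@[simp] lemma mk_add (x y : RegularExpression β) : mk g x + mk g y = mk g (x + y) := rfl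
@[simp] lemma mk_mul (x y : RegularExpression β) : mk g x * mk g y = mk g (x * y) := rfl
@[simp] lemma mk_kstar (x : RegularExpression β) : KStar.kstar (mk g x) = mk g x.star := rfl

lemma toK_add (a b : Q g) : toK g (a + b) = toK g a + toK g b := by
  induction a using Quotient.ind with | _ x =>
  induction b using Quotient.ind with | _ y => rfl

lemma toK_mul (a b : Q g) : toK g (a * b) = toK g a * toK g b := by
  induction a using Quotient.ind with | _ x =>
  induction b using Quotient.ind with | _ y => rfl

lemma toK_nsmul (n : ℕ) (a : Q g) : toK g (n • a) = n • toK g a := by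
  induction a using Quotient.ind with | _ x =>
  show interp g ((List.replicate n x).sum) = _
  rw [interp_sum, List.map_replicate, List.sum_replicate]
  rfl

lemma toK_npow (a : Q g) (n : ℕ) : toK g (a ^ n) = toK g a ^ n := by
  induction a using Quotient.ind with | _ x =>
  show interp g ((List.replicate n x).prod) = _
  rw [interp_prod, List.map_replicate, List.prod_replicate]
  rfl

lemma toK_natCast (n : ℕ) : toK g (n : Q g) = n := by
  show interp g ((List.replicate n 1).sum) = _
  rw [interp_sum, List.map_replicate, List.sum_replicate]
  show n • (1 : K) = _
  rw [nsmul_eq_mul, mul_one]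

instance : Semiring (Q g) :=
  (toK_inj g).semiring (toK g) rfl rfl (toK_add g) (toK_mul g) (fun n a => toK_nsmul g n a)
    (toK_npow g) (toK_natCast g)

instance : IdemSemiring (Q g) :=
  IdemSemiring.ofSemiring fun a => toK_inj g (by rw [toK_add]; exact add_idem _)

lemma le_iff (x y : RegularExpression β) : mk g x ≤ mk g y ↔ interp g x ≤ interp g y := by
  show mk g x + mk g y = mk g y ↔ _
  rw [mk_add]
  show Quotient.mk (sett g) (x + y) = Quotient.mk (sett g) y ↔ _
  rw [Quotient.eq]
  show interp g (x + y) = interp g y ↔ _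
  rw [interp_add]
  exact add_eq_right_iff_le

instance : KleeneAlgebra (Q g) where
  one_le_kstar a := by
    obtain ⟨x, rfl⟩ := mk_surj g a
    rw [mk_kstar]
    exact (le_iff g _ _).mpr (by rw [interp_star]; exact one_le_kstar)
  mul_kstar_le_kstar a := by
    obtain ⟨x, rfl⟩ := mk_surj g a
    rw [mk_kstar, mk_mul]
    exact (le_iff g _ _).mpr (by simp only [interp_mul, interp_star]; exact mul_kstar_le_kstar)
  kstar_mul_le_kstar a := by
    obtain ⟨x, rfl⟩ := mk_surj g a
    rw [mk_kstar, mk_mul]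
    exact (le_iff g _ _).mpr (by simp only [interp_mul, interp_star]; exact kstar_mul_le_kstar)
  mul_kstar_le_self a b h := by
    obtain ⟨x, rfl⟩ := mk_surj g a
    obtain ⟨y, rfl⟩ := mk_surj g b
    rw [mk_mul] at h
    rw [mk_kstar, mk_mul]
    refine (le_iff g _ _).mpr ?_
    simp only [interp_mul, interp_star]
    exact mul_kstar_le_self ((by simpa only [interp_mul] using (le_iff g _ _).mp h))
  kstar_mul_le_self a b h := by
    obtain ⟨x, rfl⟩ := mk_surj g a
    obtain ⟨y, rfl⟩ := mk_surj g b
    rw [mk_mul] at h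
    rw [mk_kstar, mk_mul]
    refine (le_iff g _ _).mpr ?_
    simp only [interp_mul, interp_star]
    exact kstar_mul_le_self ((by simpa only [interp_mul] using (le_iff g _ _).mp h))

lemma interp_char_mk : ∀ x : RegularExpression β,
    interp (fun a => mk g (.char a)) x = mk g x
  | .zero => rfl
  | .epsilon => rfl
  | .char a => rfl
  | .plus e f => by
    show interp (fun a => mk g (.char a)) e + interp (fun a => mk g (.char a)) f = _
    rw [interp_char_mk e, interp_char_mk f]
    rfl
  | .comp e f => by
    show interp (fun a => mk g (.char a)) e * interp (fun a => mk g (.char a)) f = _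
    rw [interp_char_mk e, interp_char_mk f]
    rfl
  | .star e => by
    show KStar.kstar (interp (fun a => mk g (.char a)) e) = _
    rw [interp_char_mk e]
    rfl

end KleUniv

/-- The characters appearing in a regular expression. -/
def chars {α : Type*} : RegularExpression α → List α
  | .zero => []
  | .epsilon => []
  | .char a => [a]
  | .plus e f => chars e ++ chars f
  | .comp e f => chars e ++ chars f
  | .star e => chars e

lemma interp_map {α β : Type*} {K : Type*} [KleeneAlgebra K] (G : β → K) (d : α → β) :
    ∀ x : RegularExpression α, interp G (x.map d) = interp (fun a => G (d a)) x
  | .zero => rfl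
  | .epsilon => rfl
  | .char a => rfl
  | .plus e f => by
    show interp G (e.map d) + interp G (f.map d) = _
    rw [interp_map G d e, interp_map G d f]
    rfl
  | .comp e f => by
    show interp G (e.map d) * interp G (f.map d) = _
    rw [interp_map G d e, interp_map G d f]
    rfl
  | .star e => by
    show KStar.kstar (interp G (e.map d)) = _
    rw [interp_map G d e]
    rfl

lemma interp_congr_chars {α : Type*} {K : Type*} [KleeneAlgebra K] {h h' : α → K} :
    ∀ x : RegularExpression α, (∀ a ∈ chars x, h' a = h a) → interp h' x = interp h x
  | .zero, _ => rfl
  | .epsilon, _ => rfl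
  | .char a, hx => hx a (by simp [chars])
  | .plus e f, hx => by
    show interp h' e + interp h' f = interp h e + interp h f
    rw [interp_congr_chars e fun a ha => hx a (by simp [chars, ha]),
      interp_congr_chars f fun a ha => hx a (by simp [chars, ha])]
  | .comp e f, hx => by
    show interp h' e * interp h' f = interp h e * interp h f
    rw [interp_congr_chars e fun a ha => hx a (by simp [chars, ha]),
      interp_congr_chars f fun a ha => hx a (by simp [chars, ha])]
  | .star e, hx => by
    show KStar.kstar (interp h' e) = KStar.kstar (interp h e)
    rw [interp_congr_chars e fun a ha => hx a (by simpa [chars] using ha)]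

/-- `kle` is universe-independent. -/
theorem kle_transfer {α : Type*} {e f : RegularExpression α} (H : kle.{v} e f) :
    kle.{w} e f := by
  intro K _ h
  classical
  set L : List α := chars e ++ chars f with hL
  let d : α → ULift.{v} ℕ := fun a => ULift.up (L.idxOf a)
  let g : ULift.{v} ℕ → K := fun n => if hn : n.down < L.length then h L[n.down] else 1
  have hg : ∀ a ∈ L, g (d a) = h a := by
    intro a ha
    have hlt : L.idxOf a < L.length := List.idxOf_lt_length_iff.mpr ha
    simp only [g, d, ULift.down_up, dif_pos hlt]
    exact congrArg h (List.getElem_idxOf hlt)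
  have key := H (KleUniv.Q g) (fun a => KleUniv.mk g (.char (d a)))
  have hi : ∀ x : RegularExpression α,
      interp (fun a => KleUniv.mk g (.char (d a))) x = KleUniv.mk g (x.map d) := by
    intro x
    rw [← KleUniv.interp_char_mk g (x.map d), interp_map]
  rw [hi e, hi f, KleUniv.le_iff] at key
  rw [interp_map, interp_map] at key
  calc interp h e = interp (fun a => g (d a)) e :=
        (interp_congr_chars e fun a ha => hg a (by simp [hL, ha])).symm
  _ ≤ interp (fun a => g (d a)) f := key
  _ = interp h f := interp_congr_chars f fun a ha => hg a (by simp [hL, ha])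

end Transfer

/-- **Least solutions of linear systems**: any linear system `(M, b)` over the regular
expressions, indexed by a finite type `Q`, admits a vector `s` such that for every `e`,
`q ↦ s q * e` is the least `e`-solution of `(M, b)`. -/
theorem linear_system_least_solution {α : Type*} {Q : Type*} [Finite Q]
    (M : Q → Q → RegularExpression α) (b : Q → RegularExpression α) :
    ∃ s : Q → RegularExpression α, ∀ e : RegularExpression α,
      (∀ q, kle (b q * e) (s q * e)) ∧
      (∀ q q', kle (M q q' * (s q' * e)) (s q * e)) ∧
      (∀ s' : Q → RegularExpression α,
        (∀ q, kle (b q * e) (s' q)) →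
        (∀ q q', kle (M q q' * s' q') (s' q)) →
        ∀ q, kle (s q * e) (s' q)) := by
  obtain ⟨n, ⟨eqv⟩⟩ := Finite.exists_equiv_fin Q
  set m : Fin n → Fin n → RegularExpression α := fun i j => M (eqv.symm i) (eqv.symm j) with hm
  set c : Fin n → RegularExpression α := fun i => b (eqv.symm i) with hc
  refine ⟨fun q => sol RegularExpression.star n m c (eqv q), fun e => ?_⟩
  refine ⟨?_, ?_, ?_⟩
  · intro q K _ h
    obtain ⟨h1, _, _⟩ := sol_spec n (fun i j => interp h (m i j)) (fun i => interp h (c i))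
    show interp h (b q) * interp h e ≤ interp h _ * interp h e
    rw [interp_sol h n m c (eqv q)]
    have := h1 (eqv q)
    simp only [hc, Equiv.symm_apply_apply] at this
    exact mul_le_mul_left this _
  · intro q q' K _ h
    obtain ⟨_, h2, _⟩ := sol_spec n (fun i j => interp h (m i j)) (fun i => interp h (c i))
    show interp h (M q q') * (interp h _ * interp h e) ≤ interp h _ * interp h e
    rw [interp_sol h n m c (eqv q), interp_sol h n m c (eqv q'), ← mul_assoc]
    have := h2 (eqv q) (eqv q')
    simp only [hm, Equiv.symm_apply_apply] at this
    exact mul_le_mul_left this _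
  · intro s' hb hM q K _ h
    obtain ⟨_, _, h3⟩ := sol_spec n (fun i j => interp h (m i j)) (fun i => interp h (c i))
    show interp h _ * interp h e ≤ interp h (s' q)
    rw [interp_sol h n m c (eqv q)]
    refine h3 (interp h e) (fun i => interp h (s' (eqv.symm i))) ?_ ?_ (eqv q) |>.trans ?_
    · intro i
      exact kle_transfer (hb (eqv.symm i)) K h
    · intro i j
      exact kle_transfer (hM (eqv.symm i) (eqv.symm j)) K h
    · rw [Equiv.symm_apply_apply]
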